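/- Let Λ ⊂ ℝ² be a unimodular lattice and suppose A, B ∈ Λ are nonzero points lying in different open quadrants such that the open rectangle (-max(|x_A|,|x_B|), max(|x_A|,|x_B|)) × (-max(|y_A|,|y_B|), max(|y_A|,|y_B|)) contains no nonzero lattice points; assume |x_A| > |x_B| and 0 < y_A < y_B. Then |det(A;B)| = 1, i.e., {A, B} is a basis of Λ. -/

import Mathlib

/-- The lattice `ℤu + ℤv ⊂ ℝ²`. -/
def lat (u v : ℝ × ℝ) : Set (ℝ × ℝ) := {p | ∃ m n : ℤ, p = m • u + n • v}

lemma lat_comb {u v p q : ℝ × ℝ} (hp : p ∈ lat u v) (hq : q ∈ lat u v)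
    (k l : ℤ) : k • p + l • q ∈ lat u v := by
  obtain ⟨m, n, rfl⟩ := hp
  obtain ⟨m', n', rfl⟩ := hq
  refine ⟨k * m + l * m', k * n + l * n', ?_⟩
  simp only [smul_add, smul_smul, add_smul]
  abel

lemma xbound {a1 b1 s t : ℝ} (hq : a1 * b1 < 0) (hx : |b1| < |a1|)
    (hs0 : 0 ≤ s) (hs1 : s < 1) (ht0 : 0 ≤ t) (ht1 : t ≤ 1) :
    |s * a1 + t * b1| < |a1| := by
  rcases lt_trichotomy a1 0 with h | h | h
  · have hb : 0 < b1 := by nlinarith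
    rw [abs_of_neg h, abs_of_pos hb] at hx
    rw [abs_of_neg h, abs_lt]
    constructor <;> nlinarith
  · rw [h, zero_mul] at hq; exact absurd hq (lt_irrefl 0)
  · have hb : b1 < 0 := by nlinarith
    rw [abs_of_pos h, abs_of_neg hb] at hx
    rw [abs_of_pos h, abs_lt]
    constructor <;> nlinarith

/-- Two consecutive pivots `A, B` (in different open quadrants, with
`|x_A| > |x_B|`, `0 < y_A < y_B`, and no nonzero lattice point in the open
rectangle `(-|x_A|, |x_A|) × (-y_B, y_B)`) of a unimodular lattice form a basis:
`|det(A;B)| = 1`. -/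
theorem consecutive_pivots_basis (u v A B : ℝ × ℝ)
    (huv : |u.1 * v.2 - u.2 * v.1| = 1)
    (hA : A ∈ lat u v) (hB : B ∈ lat u v)
    (hA0 : A ≠ 0) (hB0 : B ≠ 0)
    (hquad : A.1 * B.1 < 0)
    (hx : |B.1| < |A.1|) (hyA : 0 < A.2) (hyAB : A.2 < B.2)
    (hpiv : ∀ p ∈ lat u v, |p.1| < |A.1| → |p.2| < B.2 → p = 0) :
    |A.1 * B.2 - A.2 * B.1| = 1 := by
  obtain ⟨a, b, hAe⟩ := id hA
  obtain ⟨c, d, hBe⟩ := id hB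
  have hA1 : A.1 = (a : ℝ) * u.1 + (b : ℝ) * v.1 := by
    rw [hAe]; simp [zsmul_eq_mul]
  have hA2 : A.2 = (a : ℝ) * u.2 + (b : ℝ) * v.2 := by
    rw [hAe]; simp [zsmul_eq_mul]
  have hB1 : B.1 = (c : ℝ) * u.1 + (d : ℝ) * v.1 := by
    rw [hBe]; simp [zsmul_eq_mul]
  have hB2 : B.2 = (c : ℝ) * u.2 + (d : ℝ) * v.2 := by
    rw [hBe]; simp [zsmul_eq_mul]
  set D : ℤ := a * d - b * c with hD
  have hB2pos : 0 < B.2 := hyA.trans hyAB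
  have key : A.1 * B.2 - A.2 * B.1 = (D : ℝ) * (u.1 * v.2 - u.2 * v.1) := by
    rw [hA1, hA2, hB1, hB2]; push_cast [hD]; ring
  have hdet : A.1 * B.2 - A.2 * B.1 ≠ 0 := by
    intro h
    have h1 : A.1 * B.2 = A.2 * B.1 := by linarith
    have hApos : 0 < A.2 * B.2 := mul_pos hyA hB2pos
    have h3 : A.1 * B.1 * (A.2 * B.2) < 0 := mul_neg_of_neg_of_pos hquad hApos
    have h4 : (A.1 * B.2) * (A.2 * B.1) = A.1 * B.1 * (A.2 * B.2) := by ring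
    have h5 : 0 ≤ (A.1 * B.2) * (A.2 * B.1) := by rw [← h1]; exact mul_self_nonneg _
    linarith
  have hDne : (D : ℝ) ≠ 0 := by
    intro h
    rw [key, h, zero_mul] at hdet
    exact hdet rfl
  -- main geometric step
  have hcon : ∀ s t : ℝ, 0 ≤ s → s < 1 → 0 ≤ t → t < 1 →
      ∀ p ∈ lat u v, p.1 = s * A.1 + t * B.1 → p.2 = s * A.2 + t * B.2 →
      s = 0 ∧ t = 0 := by
    intro s t hs0 hs1 ht0 ht1 p hp hp1 hp2
    by_cases hy : s * A.2 + t * B.2 < B.2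
    · have hx1 : |p.1| < |A.1| := by rw [hp1]; exact xbound hquad hx hs0 hs1 ht0 ht1.le
      have hy1 : |p.2| < B.2 := by
        rw [hp2, abs_of_nonneg (add_nonneg (mul_nonneg hs0 hyA.le) (mul_nonneg ht0 hB2pos.le))]
        exact hy
      have h0 := hpiv p hp hx1 hy1
      have e1 : s * A.1 + t * B.1 = 0 := by rw [← hp1, h0]; rfl
      have e2 : s * A.2 + t * B.2 = 0 := by rw [← hp2, h0]; rfl
      have hs : s * (A.1 * B.2 - A.2 * B.1) = 0 := by linear_combination B.2 * e1 - B.1 * e2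
      have ht : t * (A.1 * B.2 - A.2 * B.1) = 0 := by linear_combination A.1 * e2 - A.2 * e1
      exact ⟨(mul_eq_zero.mp hs).resolve_right hdet, (mul_eq_zero.mp ht).resolve_right hdet⟩
    · exfalso
      push_neg at hy
      have hspos : 0 < s := by nlinarith
      set q : ℝ × ℝ := A + B - p with hqdef
      have hqmem : q ∈ lat u v := by
        have h := lat_comb (lat_comb hA hB 1 1) hp 1 (-1)
        rw [hqdef]
        simpa [sub_eq_add_neg] using h
      have hq1 : q.1 = (1 - s) * A.1 + (1 - t) * B.1 := by
        have h : q.1 = A.1 + B.1 - p.1 := rfl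
        rw [h, hp1]; ring
      have hq2 : q.2 = (1 - s) * A.2 + (1 - t) * B.2 := by
        have h : q.2 = A.2 + B.2 - p.2 := rfl
        rw [h, hp2]; ring
      have hx1 : |q.1| < |A.1| := by
        rw [hq1]
        exact xbound hquad hx (by linarith) (by linarith) (by linarith) (by linarith)
      have hy1 : |q.2| < B.2 := by
        rw [hq2, abs_lt]
        constructor <;> nlinarith
      have h0 := hpiv q hqmem hx1 hy1
      have e2 : (1 - s) * A.2 + (1 - t) * B.2 = 0 := by rw [← hq2, h0]; rfl
      have e1 : (1 - s) * A.1 + (1 - t) * B.1 = 0 := by rw [← hq1, h0]; rfl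
      have hs : (1 - s) * (A.1 * B.2 - A.2 * B.1) = 0 := by
        linear_combination B.2 * e1 - B.1 * e2
      have := (mul_eq_zero.mp hs).resolve_right hdet
      linarith
  -- integrality step
  have hint : ∀ p ∈ lat u v, ∀ s0 t0 : ℝ, p.1 = s0 * A.1 + t0 * B.1 →
      p.2 = s0 * A.2 + t0 * B.2 → (∃ m : ℤ, s0 = m) ∧ (∃ n : ℤ, t0 = n) := by
    intro p hp s0 t0 h1 h2
    set p' : ℝ × ℝ := p + ((-⌊s0⌋) • A + (-⌊t0⌋) • B) with hp'def
    have hp'mem : p' ∈ lat u v := by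
      have h := lat_comb hp (lat_comb hA hB (-⌊s0⌋) (-⌊t0⌋)) 1 1
      simp only [one_smul] at h
      exact h
    have c1 : p'.1 = Int.fract s0 * A.1 + Int.fract t0 * B.1 := by
      have h : p'.1 = p.1 + ((-⌊s0⌋ : ℝ) * A.1 + (-⌊t0⌋ : ℝ) * B.1) := by
        simp [hp'def, zsmul_eq_mul]
      rw [h, h1, Int.fract, Int.fract]; push_cast; ring
    have c2 : p'.2 = Int.fract s0 * A.2 + Int.fract t0 * B.2 := by
      have h : p'.2 = p.2 + ((-⌊s0⌋ : ℝ) * A.2 + (-⌊t0⌋ : ℝ) * B.2) := by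
        simp [hp'def, zsmul_eq_mul]
      rw [h, h2, Int.fract, Int.fract]; push_cast; ring
    obtain ⟨hs, ht⟩ := hcon (Int.fract s0) (Int.fract t0) (Int.fract_nonneg _)
      (Int.fract_lt_one _) (Int.fract_nonneg _) (Int.fract_lt_one _) p' hp'mem c1 c2
    constructor
    · exact ⟨⌊s0⌋, by have := Int.fract_add_floor s0; rw [hs] at this; linarith⟩
    · exact ⟨⌊t0⌋, by have := Int.fract_add_floor t0; rw [ht] at this; linarith⟩
  -- express u and v in terms of A, B
  have keyu1 : (d : ℝ) * A.1 - (b : ℝ) * B.1 = (D : ℝ) * u.1 := by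
    rw [hA1, hB1, hD]; push_cast; ring
  have keyu2 : (d : ℝ) * A.2 - (b : ℝ) * B.2 = (D : ℝ) * u.2 := by
    rw [hA2, hB2, hD]; push_cast; ring
  have keyv1 : (a : ℝ) * B.1 - (c : ℝ) * A.1 = (D : ℝ) * v.1 := by
    rw [hA1, hB1, hD]; push_cast; ring
  have keyv2 : (a : ℝ) * B.2 - (c : ℝ) * A.2 = (D : ℝ) * v.2 := by
    rw [hA2, hB2, hD]; push_cast; ring
  have humem : u ∈ lat u v := ⟨1, 0, by simp⟩
  have hvmem : v ∈ lat u v := ⟨0, 1, by simp⟩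
  have hu := hint u humem ((d : ℝ) / D) (-(b : ℝ) / D)
    (by rw [div_mul_eq_mul_div, div_mul_eq_mul_div, ← add_div]
        rw [show (d : ℝ) * A.1 + -(b : ℝ) * B.1 = (d : ℝ) * A.1 - (b : ℝ) * B.1 by ring,
          keyu1, mul_div_cancel_left₀ _ hDne])
    (by rw [div_mul_eq_mul_div, div_mul_eq_mul_div, ← add_div]
        rw [show (d : ℝ) * A.2 + -(b : ℝ) * B.2 = (d : ℝ) * A.2 - (b : ℝ) * B.2 by ring,
          keyu2, mul_div_cancel_left₀ _ hDne])
  have hv := hint v hvmem (-(c : ℝ) / D) ((a : ℝ) / D)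
    (by rw [div_mul_eq_mul_div, div_mul_eq_mul_div, ← add_div]
        rw [show -(c : ℝ) * A.1 + (a : ℝ) * B.1 = (a : ℝ) * B.1 - (c : ℝ) * A.1 by ring,
          keyv1, mul_div_cancel_left₀ _ hDne])
    (by rw [div_mul_eq_mul_div, div_mul_eq_mul_div, ← add_div]
        rw [show -(c : ℝ) * A.2 + (a : ℝ) * B.2 = (a : ℝ) * B.2 - (c : ℝ) * A.2 by ring,
          keyv2, mul_div_cancel_left₀ _ hDne])
  obtain ⟨⟨m1, hm1⟩, ⟨m2, hm2⟩⟩ := hu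
  obtain ⟨⟨m3, hm3⟩, ⟨m4, hm4⟩⟩ := hv
  rw [div_eq_iff hDne] at hm1 hm2 hm3 hm4
  have hd : d = m1 * D := by exact_mod_cast hm1
  have hb' : b = (-m2) * D := by
    have h2 : (b : ℝ) = ((-m2 : ℤ) : ℝ) * (D : ℝ) := by push_cast; linarith
    exact_mod_cast h2
  have hc' : c = (-m3) * D := by
    have h2 : (c : ℝ) = ((-m3 : ℤ) : ℝ) * (D : ℝ) := by push_cast; linarith
    exact_mod_cast h2
  have ha' : a = m4 * D := by exact_mod_cast hm4
  have hDz : D ≠ 0 := by exact_mod_cast hDne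
  have hD1 : D ∣ 1 := by
    have : D * 1 = D * (D * (m4 * m1 - (-m2) * (-m3))) := by
      nth_rewrite 1 [hD]
      rw [ha', hb', hc', hd]; ring
    exact ⟨m4 * m1 - -m2 * -m3, mul_left_cancel₀ hDz this⟩
  have : D = 1 ∨ D = -1 := Int.isUnit_iff.mp (isUnit_of_dvd_one hD1)
  rw [key, abs_mul, huv, mul_one]
  rcases this with h | h <;> rw [h] <;> norm_num
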